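/- Let x be irrational and let a_0 < a_1 < a_2 < ... be natural numbers such that the sequence (a_i·x mod 1) is strictly increasing with limit 1. Let A = {a_0, a_1, ...} and let hA denote the h-fold sumset of A for a positive integer h. Then x∗hA = {x·s mod 1 : s ∈ hA} is well-ordered by the usual order on ℝ with order type ω^h. -/

import Mathlib

open Ordinal Set
universe u

namespace Ordinal

/-- natural addition -/
noncomputable def nadd : Ordinal.{u} → Ordinal.{u} → Ordinal.{u}
  | a, b => max (⨆ a' : Set.Iio a, nadd a'.1 b + 1) (⨆ b' : Set.Iio b, nadd a b'.1 + 1)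
termination_by a b => (a, b)
decreasing_by
  · exact Prod.Lex.left _ _ a'.2
  · exact Prod.Lex.right _ b'.2

infixl:65 " ♯ " => nadd

theorem nadd_def (a b : Ordinal.{u}) :
    a ♯ b = max (⨆ a' : Set.Iio a, a'.1 ♯ b + 1) (⨆ b' : Set.Iio b, a ♯ b'.1 + 1) := by
  rw [nadd]

theorem nadd_le_iff {a b c : Ordinal.{u}} :
    a ♯ b ≤ c ↔ (∀ a' < a, a' ♯ b < c) ∧ ∀ b' < b, a ♯ b' < c := by
  rw [nadd_def, max_le_iff, Ordinal.iSup_le_iff, Ordinal.iSup_le_iff]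
  simp only [Order.add_one_le_iff, Subtype.forall, Set.mem_Iio]

theorem lt_nadd_of_lt_left {a a' : Ordinal.{u}} (b : Ordinal.{u}) (h : a < a') :
    a ♯ b < a' ♯ b := by
  rw [nadd_def a' b]
  refine lt_of_lt_of_le ?_ (le_max_left _ _)
  exact lt_of_lt_of_le (Order.lt_add_one_iff.2 le_rfl)
    (Ordinal.le_iSup (fun x : Set.Iio a' => x.1 ♯ b + 1) ⟨a, h⟩)

theorem lt_nadd_of_lt_right (a : Ordinal.{u}) {b b' : Ordinal.{u}} (h : b < b') :
    a ♯ b < a ♯ b' := by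
  rw [nadd_def a b']
  refine lt_of_lt_of_le ?_ (le_max_right _ _)
  exact lt_of_lt_of_le (Order.lt_add_one_iff.2 le_rfl)
    (Ordinal.le_iSup (fun x : Set.Iio b' => a ♯ x.1 + 1) ⟨b, h⟩)

theorem nadd_lt_nadd_of_lt_of_le {a a' b b' : Ordinal.{u}} (ha : a < a') (hb : b ≤ b') :
    a ♯ b < a' ♯ b' := by
  rcases hb.lt_or_eq with hb | rfl
  · exact lt_trans (lt_nadd_of_lt_left b ha) (lt_nadd_of_lt_right a' hb)
  · exact lt_nadd_of_lt_left b ha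

theorem nadd_lt_nadd_of_le_of_lt {a a' b b' : Ordinal.{u}} (ha : a ≤ a') (hb : b < b') :
    a ♯ b < a' ♯ b' := by
  rcases ha.lt_or_eq with ha | rfl
  · exact lt_trans (lt_nadd_of_lt_right a hb) (lt_nadd_of_lt_left b' ha)
  · exact lt_nadd_of_lt_right a hb

@[simp]
theorem zero_nadd_zero : (0 : Ordinal.{u}) ♯ 0 = 0 :=
  le_antisymm (nadd_le_iff.2 ⟨fun a' h => absurd h (not_lt_of_ge (zero_le : (0 : Ordinal.{u}) ≤ a')),
    fun b' h => absurd h (not_lt_of_ge (zero_le : (0 : Ordinal.{u}) ≤ b'))⟩) zero_le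

end Ordinal

/-- The order type of a well-ordered set of reals. -/
noncomputable def orderType (s : Set ℝ) (h : s.IsWF) : Ordinal :=
  haveI : WellFoundedLT s := ⟨h⟩
  Ordinal.type ((· < ·) : s → s → Prop)

namespace StmtAux

variable {S T : Set ℝ}

theorem orderType_congr {S T : Set ℝ} (hST : S = T) (hS : S.IsWF) (hT : T.IsWF) :
    orderType S hS = orderType T hT := by subst hST; rfl

theorem orderType_mono (hS : S.IsWF) (hT : T.IsWF) (h : S ⊆ T) :
    orderType S hS ≤ orderType T hT := by
  haveI : WellFoundedLT S := ⟨hS⟩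
  haveI : WellFoundedLT T := ⟨hT⟩
  exact (RelEmbedding.ofMonotone (r := ((· < ·) : S → S → Prop))
    (s := ((· < ·) : T → T → Prop)) (fun y => ⟨y.1, h y.2⟩)
    (fun a b hab => hab)).ordinal_type_le

theorem isWF_seg (hS : S.IsWF) (z : ℝ) : ({y ∈ S | y < z}).IsWF :=
  hS.mono (fun _ hy => hy.1)

theorem orderType_seg (hS : S.IsWF) (z : S) :
    haveI : WellFoundedLT S := ⟨hS⟩
    orderType {y ∈ S | y < z.1} (isWF_seg hS z.1) =
      Ordinal.typein ((· < ·) : S → S → Prop) z := by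
  haveI : WellFoundedLT S := ⟨hS⟩
  haveI : WellFoundedLT ({y ∈ S | y < z.1} : Set ℝ) := ⟨isWF_seg hS z.1⟩
  rw [← Ordinal.type_subrel]
  refine Ordinal.type_eq.2 ⟨?_⟩
  refine RelIso.mk (Equiv.mk
    (fun y => ⟨⟨y.1, y.2.1⟩, y.2.2⟩)
    (fun w => (⟨w.1.1, w.1.2, w.2⟩ : ({y ∈ S | y < z.1} : Set ℝ)))
    (fun w => rfl) (fun y => rfl)) ?_
  intro a b
  exact Iff.rfl

theorem orderType_seg_lt (hS : S.IsWF) (z : S) :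
    orderType {y ∈ S | y < z.1} (isWF_seg hS z.1) < orderType S hS := by
  haveI : WellFoundedLT S := ⟨hS⟩
  rw [orderType_seg hS z]
  exact Ordinal.typein_lt_type _ z

theorem exists_seg_eq (hS : S.IsWF) {c : Ordinal} (hc : ¬ orderType S hS ≤ c) :
    ∃ z : S, orderType {y ∈ S | y < z.1} (isWF_seg hS z.1) = c := by
  haveI : WellFoundedLT S := ⟨hS⟩
  obtain ⟨z, hz⟩ := Ordinal.typein_surj ((· < ·) : S → S → Prop) (lt_of_not_ge hc)
  exact ⟨z, by rw [orderType_seg hS z, hz]⟩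

theorem orderType_le_of_seg (hS : S.IsWF) {c : Ordinal}
    (h : ∀ z ∈ S, orderType {y ∈ S | y < z} (isWF_seg hS z) < c) : orderType S hS ≤ c := by
  by_contra hc
  obtain ⟨z, hz⟩ := exists_seg_eq hS hc
  exact absurd hz (ne_of_lt (h z.1 z.2))

theorem orderType_empty_le : ∀ (h : (∅ : Set ℝ).IsWF), orderType ∅ h ≤ 0 := fun h =>
  orderType_le_of_seg h (fun z hz => absurd hz (Set.notMem_empty z))

theorem seg_union (S T : Set ℝ) (z : ℝ) :
    {y ∈ S ∪ T | y < z} = {y ∈ S | y < z} ∪ {y ∈ T | y < z} := by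
  ext y
  constructor
  · rintro ⟨hy | hy, hlt⟩
    · exact Or.inl ⟨hy, hlt⟩
    · exact Or.inr ⟨hy, hlt⟩
  · rintro (⟨hy, hlt⟩ | ⟨hy, hlt⟩)
    · exact ⟨Or.inl hy, hlt⟩
    · exact ⟨Or.inr hy, hlt⟩

theorem orderType_union_le_nadd :
    ∀ (o : Ordinal) (S T : Set ℝ) (hS : S.IsWF) (hT : T.IsWF),
      orderType S hS ♯ orderType T hT ≤ o →
      orderType (S ∪ T) (hS.union hT) ≤ orderType S hS ♯ orderType T hT := by
  intro o
  induction o using Ordinal.induction with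
  | h o IH =>
    intro S T hS hT ho
    by_contra hc
    obtain ⟨z, hz⟩ := exists_seg_eq (hS.union hT) hc
    have hseg : {y ∈ S ∪ T | y < z.1} = {y ∈ S | y < z.1} ∪ {y ∈ T | y < z.1} :=
      seg_union S T z.1
    have hSz := isWF_seg hS z.1
    have hTz := isWF_seg hT z.1
    rcases z.2 with hzS | hzT
    · have h1 : orderType {y ∈ S | y < z.1} hSz < orderType S hS :=
        orderType_seg_lt hS ⟨z.1, hzS⟩
      have h2 : orderType {y ∈ T | y < z.1} hTz ≤ orderType T hT :=
        orderType_mono hTz hT (fun y hy => hy.1)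
      have hlt : orderType {y ∈ S | y < z.1} hSz ♯ orderType {y ∈ T | y < z.1} hTz
          < orderType S hS ♯ orderType T hT :=
        Ordinal.nadd_lt_nadd_of_lt_of_le h1 h2
      have := IH _ (lt_of_lt_of_le hlt ho) _ _ hSz hTz le_rfl
      rw [← orderType_congr hseg (isWF_seg (hS.union hT) z.1) (hSz.union hTz), hz] at this
      exact absurd (lt_of_le_of_lt this hlt) (lt_irrefl _)
    · have h1 : orderType {y ∈ T | y < z.1} hTz < orderType T hT :=
        orderType_seg_lt hT ⟨z.1, hzT⟩
      have h2 : orderType {y ∈ S | y < z.1} hSz ≤ orderType S hS :=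
        orderType_mono hSz hS (fun y hy => hy.1)
      have hlt : orderType {y ∈ S | y < z.1} hSz ♯ orderType {y ∈ T | y < z.1} hTz
          < orderType S hS ♯ orderType T hT :=
        Ordinal.nadd_lt_nadd_of_le_of_lt h2 h1
      have := IH _ (lt_of_lt_of_le hlt ho) _ _ hSz hTz le_rfl
      rw [← orderType_congr hseg (isWF_seg (hS.union hT) z.1) (hSz.union hTz), hz] at this
      exact absurd (lt_of_le_of_lt this hlt) (lt_irrefl _)

theorem orderType_union_le (S T : Set ℝ) (hS : S.IsWF) (hT : T.IsWF) :
    orderType (S ∪ T) (hS.union hT) ≤ orderType S hS ♯ orderType T hT :=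
  orderType_union_le_nadd _ S T hS hT le_rfl

theorem pow_omega_pos (p : ℕ) : (0 : Ordinal) < omega0 ^ p := by
  induction p with
  | zero => rw [pow_zero]; exact zero_lt_one
  | succ p IH => rw [pow_succ]; exact mul_pos IH omega0_pos

theorem pow_omega_lt_succ (p : ℕ) : (omega0 ^ p : Ordinal) < omega0 ^ (p + 1) := by
  rw [pow_succ]
  conv_lhs => rw [← mul_one (omega0 ^ p : Ordinal)]
  exact mul_lt_mul_of_pos_left one_lt_omega0 (pow_omega_pos p)

theorem decomp {d a : Ordinal.{0}} (hd : d ≠ 0) (h : a < d * omega0) :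
    ∃ (q : ℕ) (r : Ordinal), r < d ∧ a = d * q + r := by
  have hq : a / d < omega0 := (Ordinal.div_lt hd).2 h
  obtain ⟨q, hq⟩ := Ordinal.lt_omega0.1 hq
  exact ⟨q, a % d, Ordinal.mod_lt a hd, by rw [← hq, Ordinal.div_add_mod]⟩

theorem lex_lt {d : Ordinal.{0}} {q q' : ℕ} {r r' : Ordinal.{0}} (hr : r < d) (hr' : r' < d)
    (h : d * q + r < d * q' + r') : q < q' ∨ (q = q' ∧ r < r') := by
  rcases lt_trichotomy q q' with hqq | hqq | hqq
  · exact Or.inl hqq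
  · subst hqq
    exact Or.inr ⟨rfl, (add_lt_add_iff_left _).1 h⟩
  · exfalso
    have h1 : d * q' + r' < d * (q' + 1) := by
      rw [mul_add, mul_one]
      exact add_lt_add_right hr' _
    have h2 : d * ((q' : Ordinal) + 1) ≤ d * q := by
      apply mul_le_mul_right
      have h4 : ((q' + 1 : ℕ) : Ordinal.{0}) ≤ ((q : ℕ) : Ordinal.{0}) :=
        Nat.cast_le.2 hqq
      rw [Nat.cast_add, Nat.cast_one] at h4
      exact h4
    have h3 : d * q ≤ d * q + r := le_self_add
    exact absurd (lt_trans h (lt_of_lt_of_le h1 (le_trans h2 h3))) (lt_irrefl _)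

theorem sub_decomp {d : Ordinal.{0}} (hd : d ≠ 0) {q : ℕ} {r : Ordinal.{0}} (hr : r < d)
    {a : Ordinal.{0}} (h : a < d * q + r) :
    ∃ (s : ℕ) (t : Ordinal), t < d ∧ a = d * s + t ∧ (s < q ∨ (s = q ∧ t < r)) := by
  have h1 : a < d * omega0 := by
    refine lt_of_lt_of_le h ?_
    calc d * q + r ≤ d * q + d := le_of_lt (add_lt_add_right hr _)
    _ = d * (q + 1) := by rw [mul_add, mul_one]
    _ ≤ d * omega0 := mul_le_mul_right (le_of_lt (by exact_mod_cast nat_lt_omega0 (q + 1))) _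
  obtain ⟨s, t, ht, hst⟩ := decomp hd h1
  subst hst
  rcases lex_lt ht hr h with hs | ⟨hs, htr⟩
  · exact ⟨s, t, ht, rfl, Or.inl hs⟩
  · exact ⟨s, t, ht, rfl, Or.inr ⟨hs, htr⟩⟩

theorem nadd_decomp_le (p : ℕ)
    (C : ∀ a b : Ordinal.{0}, a < omega0 ^ p → b < omega0 ^ p → a ♯ b < omega0 ^ p) :
    ∀ (k : ℕ) (ρ : Ordinal.{0}) (q q' : ℕ) (r r' : Ordinal.{0}), q + q' ≤ k → r ♯ r' < ρ →
      r < omega0 ^ p → r' < omega0 ^ p →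
      (omega0 ^ p * q + r) ♯ (omega0 ^ p * q' + r') ≤ omega0 ^ p * (q + q' : ℕ) + (r ♯ r') := by
  intro k
  induction k using Nat.strong_induction_on with
  | _ k IHk =>
    intro ρ
    induction ρ using Ordinal.induction with
    | h ρ IHρ =>
      intro q q' r r' hk hρ hr hr'
      set d : Ordinal := omega0 ^ p with hd
      have hd0 : d ≠ 0 := ne_of_gt (pow_omega_pos p)
      rw [Ordinal.nadd_le_iff]
      constructor
      · intro a' ha'
        obtain ⟨s, t, ht, rfl, hcase⟩ := sub_decomp hd0 hr ha'
        rcases hcase with hs | ⟨hs, htr⟩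
        · have hkey := IHk (s + q') (by omega) ((t ♯ r') + 1) s q' t r'
            le_rfl (lt_add_one _) ht hr'
          refine lt_of_le_of_lt hkey ?_
          have h1 : d * (s + q' : ℕ) + (t ♯ r') < d * (s + q' : ℕ) + d :=
            add_lt_add_right (C t r' ht hr') _
          have h2 : d * (s + q' : ℕ) + d = d * ((s + q' + 1 : ℕ) : Ordinal) := by
            push_cast
            conv_rhs => rw [mul_add, mul_one]
          have h3 : d * ((s + q' + 1 : ℕ) : Ordinal) ≤ d * (q + q' : ℕ) :=
            mul_le_mul_right (Nat.cast_le.2 (by omega)) _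
          exact lt_of_lt_of_le (h2 ▸ h1) (le_trans h3 (le_self_add))
        · subst hs
          have hkey := IHρ (r ♯ r') hρ s q' t r' hk
            (Ordinal.nadd_lt_nadd_of_lt_of_le htr le_rfl) ht hr'
          refine lt_of_le_of_lt hkey ?_
          exact add_lt_add_right (Ordinal.nadd_lt_nadd_of_lt_of_le htr le_rfl) _
      · intro b' hb'
        obtain ⟨s, t, ht, rfl, hcase⟩ := sub_decomp hd0 hr' hb'
        rcases hcase with hs | ⟨hs, htr⟩
        · have hkey := IHk (q + s) (by omega) ((r ♯ t) + 1) q s r t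
            le_rfl (lt_add_one _) hr ht
          refine lt_of_le_of_lt hkey ?_
          have h1 : d * (q + s : ℕ) + (r ♯ t) < d * (q + s : ℕ) + d :=
            add_lt_add_right (C r t hr ht) _
          have h2 : d * (q + s : ℕ) + d = d * ((q + s + 1 : ℕ) : Ordinal) := by
            push_cast
            conv_rhs => rw [mul_add, mul_one]
          have h3 : d * ((q + s + 1 : ℕ) : Ordinal) ≤ d * (q + q' : ℕ) :=
            mul_le_mul_right (Nat.cast_le.2 (by omega)) _
          exact lt_of_lt_of_le (h2 ▸ h1) (le_trans h3 (le_self_add))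
        · subst hs
          have hkey := IHρ (r ♯ r') hρ q s r t hk
            (Ordinal.nadd_lt_nadd_of_le_of_lt le_rfl htr) hr ht
          refine lt_of_le_of_lt hkey ?_
          exact add_lt_add_right (Ordinal.nadd_lt_nadd_of_le_of_lt le_rfl htr) _

theorem nadd_lt_pow : ∀ (p : ℕ) {a b : Ordinal.{0}},
    a < omega0 ^ p → b < omega0 ^ p → a ♯ b < omega0 ^ p := by
  intro p
  induction p with
  | zero =>
    intro a b ha hb
    rw [pow_zero] at *
    rw [Ordinal.lt_one_iff_zero] at ha hb
    subst ha; subst hb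
    simpa using zero_lt_one
  | succ p IH =>
    intro a b ha hb
    rw [pow_succ] at ha hb
    have hd0 : (omega0 ^ p : Ordinal) ≠ 0 := ne_of_gt (pow_omega_pos p)
    obtain ⟨q, r, hr, rfl⟩ := decomp hd0 ha
    obtain ⟨q', r', hr', rfl⟩ := decomp hd0 hb
    have hkey := nadd_decomp_le p (fun a b ha hb => IH ha hb) (q + q') ((r ♯ r') + 1)
      q q' r r' le_rfl (lt_add_one _) hr hr'
    refine lt_of_le_of_lt hkey ?_
    have h1 : omega0 ^ p * (q + q' : ℕ) + (r ♯ r') < omega0 ^ p * (q + q' : ℕ) + omega0 ^ p :=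
      add_lt_add_right (IH hr hr') _
    have h2 : omega0 ^ p * ((q + q' : ℕ) : Ordinal) + omega0 ^ p
        = omega0 ^ p * ((q + q' + 1 : ℕ) : Ordinal) := by
      push_cast
      conv_rhs => rw [mul_add, mul_one]
    rw [pow_succ]
    refine lt_of_lt_of_le (h2 ▸ h1) ?_
    exact mul_le_mul_right (le_of_lt (nat_lt_omega0 _)) _

theorem orderType_lt_pow_of_empty (p : ℕ) (h : (∅ : Set ℝ).IsWF) :
    orderType ∅ h < omega0 ^ p :=
  lt_of_le_of_lt (orderType_empty_le h) (pow_omega_pos p)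

/-- finite unions of small sets are small -/
theorem union_lt (p : ℕ) (f : ℕ → Set ℝ) (hWF : ∀ i, (f i).IsWF)
    (hlt : ∀ i, orderType (f i) (hWF i) < omega0 ^ p) :
    ∀ n, ∃ hU : ({y | ∃ i < n, y ∈ f i} : Set ℝ).IsWF, orderType _ hU < omega0 ^ p := by
  intro n
  induction n with
  | zero =>
    have he : ({y | ∃ i < 0, y ∈ f i} : Set ℝ) = ∅ := by
      ext y; simp
    rw [he]
    exact ⟨Set.Finite.isWF (Set.finite_empty), orderType_lt_pow_of_empty p _⟩
  | succ n IH =>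
    obtain ⟨hU, hIH⟩ := IH
    have he : ({y | ∃ i < n + 1, y ∈ f i} : Set ℝ) = {y | ∃ i < n, y ∈ f i} ∪ f n := by
      ext y
      simp only [Set.mem_setOf_eq, Set.mem_union]
      constructor
      · rintro ⟨i, hi, hy⟩
        rcases Nat.lt_succ_iff_lt_or_eq.1 hi with hi | rfl
        · exact Or.inl ⟨i, hi, hy⟩
        · exact Or.inr hy
      · rintro (⟨i, hi, hy⟩ | hy)
        · exact ⟨i, Nat.lt_succ_of_lt hi, hy⟩
        · exact ⟨n, Nat.lt_succ_self n, hy⟩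
    have hWFU : ({y | ∃ i < n + 1, y ∈ f i} : Set ℝ).IsWF := by
      rw [he]; exact hU.union (hWF n)
    refine ⟨hWFU, ?_⟩
    rw [orderType_congr he hWFU (hU.union (hWF n))]
    exact lt_of_le_of_lt (orderType_union_le _ _ hU (hWF n))
      (nadd_lt_pow p hIH (hlt n))

theorem isWF_image {S : Set ℝ} (hS : S.IsWF) {g : ℝ → ℝ}
    (hg : ∀ a ∈ S, ∀ b ∈ S, a < b → g a < g b) : (g '' S).IsWF := by
  rw [Set.isWF_iff_no_descending_seq]
  intro u hu hmem
  have hsel : ∀ n : ℕ, ∃ v, v ∈ S ∧ g v = u n := fun n => hmem n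
  choose v hvS hgv using hsel
  rw [Set.isWF_iff_no_descending_seq] at hS
  refine hS v ?_ hvS
  intro m n hmn
  rcases lt_trichotomy (v n) (v m) with h | h | h
  · exact h
  · exfalso
    have := hu hmn
    rw [← hgv m, ← hgv n, h] at this
    exact lt_irrefl _ this
  · exfalso
    have h1 := hg _ (hvS m) _ (hvS n) h
    have := hu hmn
    rw [← hgv m, ← hgv n] at this
    exact lt_irrefl _ (lt_trans h1 this)

theorem orderType_image {S : Set ℝ} (hS : S.IsWF) {g : ℝ → ℝ}
    (hg : ∀ a ∈ S, ∀ b ∈ S, a < b → g a < g b) :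
    orderType (g '' S) (isWF_image hS hg) = orderType S hS := by
  haveI : WellFoundedLT S := ⟨hS⟩
  haveI : WellFoundedLT (g '' S : Set ℝ) := ⟨isWF_image hS hg⟩
  refine (Ordinal.type_eq.2 ⟨?_⟩).symm
  have hbij : Function.Bijective (fun y : S => (⟨g y.1, Set.mem_image_of_mem g y.2⟩ : g '' S)) := by
    constructor
    · intro a b hab
      have hab' : g a.1 = g b.1 := congrArg Subtype.val hab
      rcases lt_trichotomy a.1 b.1 with h | h | h
      · exact absurd hab' (ne_of_lt (hg _ a.2 _ b.2 h))
      · exact Subtype.ext h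
      · exact absurd hab'.symm (ne_of_lt (hg _ b.2 _ a.2 h))
    · rintro ⟨y, w, hwS, rfl⟩
      exact ⟨⟨w, hwS⟩, rfl⟩
  refine RelIso.mk (Equiv.ofBijective _ hbij) ?_
  intro a b
  constructor
  · intro hab
    rcases lt_trichotomy a.1 b.1 with h | h | h
    · exact h
    · exact absurd (show g a.1 = g b.1 from congrArg (fun t : ℝ => g t) h) (ne_of_lt hab)
    · exact absurd (hg _ b.2 _ a.2 h) (lt_asymm hab)
  · intro hab
    exact hg _ a.2 _ b.2 hab

theorem isWF_of_seg {S : Set ℝ} (h : ∀ z ∈ S, ({y ∈ S | y < z} : Set ℝ).IsWF) : S.IsWF := by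
  rw [Set.isWF_iff_no_descending_seq]
  intro u hu hmem
  have h1 := h (u 0) (hmem 0)
  rw [Set.isWF_iff_no_descending_seq] at h1
  refine h1 (fun n => u (n + 1)) ?_ ?_
  · intro m n hmn
    exact hu (by omega : m + 1 < n + 1)
  · intro n
    exact ⟨hmem (n + 1), hu (Nat.succ_pos n)⟩

section Eps

variable (ε : ℕ → ℝ)

/-- negated g-fold sums of values of ε -/
def Nset (g : ℕ) : Set ℝ := Set.range (fun f : Fin g → ℕ => -∑ j, ε (f j))

theorem Nset_zero : Nset ε 0 = {0} := by
  ext y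
  constructor
  · rintro ⟨f, rfl⟩
    simp
  · rintro rfl
    exact ⟨fun i => i.elim0, by simp⟩

theorem peel (hanti : Antitone ε) {g : ℕ} (f : Fin (g + 1) → ℕ) :
    ∃ (i : ℕ) (f' : Fin g → ℕ), (∑ j, ε (f j)) = ε i + ∑ j, ε (f' j) ∧
      (∑ j, ε (f j)) ≤ (g + 1) * ε i := by
  obtain ⟨j₀, _, hmin⟩ := Finset.exists_min_image Finset.univ f ⟨0, Finset.mem_univ 0⟩
  refine ⟨f j₀, f ∘ j₀.succAbove, ?_, ?_⟩
  · exact Fin.sum_univ_succAbove (fun j => ε (f j)) j₀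
  · have hle : ∀ j ∈ Finset.univ, ε (f j) ≤ ε (f j₀) :=
      fun j _ => hanti (hmin j (Finset.mem_univ j))
    calc (∑ j, ε (f j)) ≤ Finset.univ.card • ε (f j₀) := Finset.sum_le_card_nsmul _ _ _ hle
    _ = (g + 1) * ε (f j₀) := by
      rw [Finset.card_univ, Fintype.card_fin]
      rw [_root_.nsmul_eq_mul]
      push_cast
      ring

theorem Nset_core (hpos : ∀ i, 0 < ε i) (hanti : Antitone ε)
    (hto : Filter.Tendsto ε Filter.atTop (nhds 0)) :
    ∀ g : ℕ, ∃ hWF : (Nset ε g).IsWF, orderType (Nset ε g) hWF ≤ omega0 ^ g := by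
  intro g
  induction g with
  | zero =>
    rw [Nset_zero]
    refine ⟨Set.Finite.isWF (Set.finite_singleton 0), ?_⟩
    rw [pow_zero]
    refine orderType_le_of_seg _ ?_
    intro z hz
    rcases hz with rfl
    have he : ({y ∈ ({0} : Set ℝ) | y < 0} : Set ℝ) = ∅ := by
      ext y
      simp only [Set.mem_setOf_eq, Set.mem_singleton_iff, Set.mem_empty_iff_false, iff_false,
        not_and]
      rintro rfl
      exact lt_irrefl 0
    rw [orderType_congr he _ (Set.Finite.isWF Set.finite_empty)]
    exact lt_of_le_of_lt (orderType_empty_le _) zero_lt_one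
  | succ g IH =>
    obtain ⟨hWFg, hle⟩ := IH
    -- the key covering fact for segments
    have hcover : ∀ z ∈ Nset ε (g + 1), ∃ N : ℕ,
        {y ∈ Nset ε (g + 1) | y < z} ⊆
          {y | ∃ i < N, y ∈ (fun w => -ε i + w) '' Nset ε g} := by
      rintro z ⟨fz, rfl⟩
      set τ : ℝ := ∑ j, ε (fz j) with hτ
      have hτpos : 0 < τ := Finset.sum_pos (fun j _ => hpos (fz j)) Finset.univ_nonempty
      have hδ : (0 : ℝ) < τ / (g + 1) := by positivity
      obtain ⟨N, hN⟩ := (Filter.tendsto_atTop'.1 hto) (Set.Iio (τ / (g + 1)))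
        (Iio_mem_nhds hδ)
      refine ⟨N, ?_⟩
      rintro y ⟨⟨f, rfl⟩, hlt⟩
      obtain ⟨i, f', hsum, hbound⟩ := peel ε hanti f
      have hlt' : -(∑ j, ε (f j)) < -τ := hlt
      have htpos : (∑ j, ε (f j)) > τ := by linarith
      have hiN : i < N := by
        by_contra hiN
        push_neg at hiN
        have h1 : ε i < τ / (g + 1) := hN i hiN
        have h2 : (∑ j, ε (f j)) ≤ (g + 1) * ε i := hbound
        have h3 : ((g : ℝ) + 1) * ε i < (g + 1) * (τ / (g + 1)) := by
          apply mul_lt_mul_of_pos_left h1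
          positivity
        rw [mul_div_cancel₀] at h3
        · linarith
        · positivity
      refine ⟨i, hiN, ⟨-∑ j, ε (f' j), ⟨f', rfl⟩, ?_⟩⟩
      show -ε i + -∑ j, ε (f' j) = -∑ j, ε (f j)
      rw [hsum]
      ring
    have hpieceWF : ∀ i : ℕ, ((fun w => -ε i + w) '' Nset ε g).IsWF :=
      fun i => isWF_image hWFg (fun a _ b _ hab => by linarith)
    have hpiece : ∀ i : ℕ, orderType _ (hpieceWF i) < omega0 ^ (g + 1) := by
      intro i
      rw [orderType_image hWFg (fun a _ b _ hab => by linarith)]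
      exact lt_of_le_of_lt hle (pow_omega_lt_succ g)
    -- WF
    have hWF : (Nset ε (g + 1)).IsWF := by
      apply isWF_of_seg
      intro z hz
      obtain ⟨N, hsub⟩ := hcover z hz
      obtain ⟨hU, _⟩ := union_lt (g + 1) _ hpieceWF hpiece N
      exact hU.mono hsub
    refine ⟨hWF, ?_⟩
    apply orderType_le_of_seg
    intro z hz
    obtain ⟨N, hsub⟩ := hcover z hz
    obtain ⟨hU, hUlt⟩ := union_lt (g + 1) _ hpieceWF hpiece N
    exact lt_of_le_of_lt (orderType_mono (isWF_seg hWF z) hU hsub) hUlt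

theorem eps_c_mono (c : ℕ → ℕ) (hpos : ∀ i, 0 < ε i)
    (hcs : ∀ m, ε (c (m + 1)) < ε (c m) / 4) :
    ∀ m k : ℕ, ε (c (m + k)) ≤ ε (c m) := by
  intro m k
  induction k with
  | zero => simp
  | succ k IH =>
    have h1 := hcs (m + k)
    have h2 := hpos (c (m + k))
    calc ε (c (m + (k + 1))) = ε (c ((m + k) + 1)) := by ring_nf
    _ ≤ ε (c m) := by linarith

theorem eps_c_mono' (c : ℕ → ℕ) (hpos : ∀ i, 0 < ε i)
    (hcs : ∀ m, ε (c (m + 1)) < ε (c m) / 4) {m m' : ℕ} (h : m ≤ m') :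
    ε (c m') ≤ ε (c m) := by
  obtain ⟨k, rfl⟩ := Nat.exists_eq_add_of_le h
  exact eps_c_mono ε c hpos hcs m k

theorem emb (hpos : ∀ i, 0 < ε i) (c : ℕ → ℕ)
    (hcs : ∀ m, ε (c (m + 1)) < ε (c m) / 4) :
    ∀ g : ℕ, ∃ φ : ℕ → Ordinal.{0} → ℝ,
      (∀ M o, o < omega0 ^ g → ∃ f : Fin g → ℕ, φ M o = ∑ j, ε (f j)) ∧
      (∀ M o, o < omega0 ^ g → 0 ≤ φ M o ∧ φ M o ≤ (4/3) * ε (c M)) ∧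
      (∀ M o o', o < o' → o' < omega0 ^ g → φ M o' < φ M o) := by
  intro g
  induction g with
  | zero =>
    refine ⟨fun _ _ => 0, ?_, ?_, ?_⟩
    · intro M o _
      exact ⟨fun j => j.elim0, by simp⟩
    · intro M o _
      constructor
      · exact le_refl _
      · have := hpos (c M); positivity
    · intro M o o' hoo ho'
      rw [pow_zero, Ordinal.lt_one_iff_zero] at ho'
      subst ho'
      exact absurd hoo (not_lt_of_ge (zero_le : (0 : Ordinal) ≤ o))
  | succ g IH =>
    obtain ⟨ψ, ψA, ψB, ψC⟩ := IH
    classical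
    have hd0 : (omega0 ^ g : Ordinal.{0}) ≠ 0 := ne_of_gt (pow_omega_pos g)
    have hdec : ∀ o : Ordinal.{0}, o < omega0 ^ (g + 1) →
        ∃ qr : ℕ × Ordinal.{0}, qr.2 < omega0 ^ g ∧ o = omega0 ^ g * qr.1 + qr.2 := by
      intro o ho
      rw [pow_succ] at ho
      obtain ⟨q, r, h1, h2⟩ := decomp hd0 ho
      exact ⟨(q, r), h1, h2⟩
    set Q : Ordinal.{0} → ℕ × Ordinal.{0} := fun o =>
      if ho : o < omega0 ^ (g + 1) then (hdec o ho).choose else (0, 0) with hQ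
    have hQspec : ∀ o (ho : o < omega0 ^ (g + 1)),
        (Q o).2 < omega0 ^ g ∧ o = omega0 ^ g * (Q o).1 + (Q o).2 := by
      intro o ho
      rw [hQ]
      simp only [dif_pos ho]
      exact (hdec o ho).choose_spec
    refine ⟨fun M o => ε (c (M + (Q o).1)) + ψ (M + (Q o).1 + 1) (Q o).2, ?_, ?_, ?_⟩
    · intro M o ho
      obtain ⟨hr, _⟩ := hQspec o ho
      obtain ⟨f', hf'⟩ := ψA (M + (Q o).1 + 1) (Q o).2 hr
      refine ⟨Fin.cons (c (M + (Q o).1)) f', ?_⟩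
      beta_reduce
      rw [hf']
      simp [Fin.sum_univ_succ]
    · intro M o ho
      obtain ⟨hr, _⟩ := hQspec o ho
      obtain ⟨hψ0, hψle⟩ := ψB (M + (Q o).1 + 1) (Q o).2 hr
      have h1 := hpos (c (M + (Q o).1))
      constructor
      · show (0:ℝ) ≤ ε (c (M + (Q o).1)) + ψ (M + (Q o).1 + 1) (Q o).2
        linarith
      · have h2 := hcs (M + (Q o).1)
        have h3 : ε (c (M + (Q o).1)) ≤ ε (c M) :=
          eps_c_mono' ε c hpos hcs (Nat.le_add_right M _)
        have h4 : ε (c (M + (Q o).1 + 1)) < ε (c (M + (Q o).1)) / 4 := hcs _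
        show ε (c (M + (Q o).1)) + ψ (M + (Q o).1 + 1) (Q o).2 ≤ 4 / 3 * ε (c M)
        linarith
    · intro M o o' hoo ho'
      have ho : o < omega0 ^ (g + 1) := lt_trans hoo ho'
      obtain ⟨hr, heq⟩ := hQspec o ho
      obtain ⟨hr', heq'⟩ := hQspec o' ho'
      have hlex := lex_lt hr hr' (by rw [← heq, ← heq']; exact hoo)
      rcases hlex with hq | ⟨hq, hrr⟩
      · -- q < q' : value at o' much smaller
        obtain ⟨hψ0, hψle⟩ := ψB (M + (Q o').1 + 1) (Q o').2 hr'
        obtain ⟨hψ0', _⟩ := ψB (M + (Q o).1 + 1) (Q o).2 hr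
        have h1 : ε (c (M + (Q o').1 + 1)) < ε (c (M + (Q o').1)) / 4 := hcs _
        have h2 : ε (c (M + (Q o').1)) ≤ ε (c (M + (Q o).1 + 1)) :=
          eps_c_mono' ε c hpos hcs (by omega)
        have h3 : ε (c (M + (Q o).1 + 1)) < ε (c (M + (Q o).1)) / 4 := hcs _
        have h4 := hpos (c (M + (Q o').1))
        have h5 := hpos (c (M + (Q o).1))
        show ε (c (M + (Q o').1)) + ψ (M + (Q o').1 + 1) (Q o').2
          < ε (c (M + (Q o).1)) + ψ (M + (Q o).1 + 1) (Q o).2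
        linarith
      · -- q = q' and r < r'
        show ε (c (M + (Q o').1)) + ψ (M + (Q o').1 + 1) (Q o').2
          < ε (c (M + (Q o).1)) + ψ (M + (Q o).1 + 1) (Q o).2
        rw [← hq]
        have := ψC (M + (Q o).1 + 1) (Q o).2 (Q o').2 hrr hr'
        exact add_lt_add_right this _

end Eps

end StmtAux

open StmtAux in
/-- If `x` is irrational, `a₀ < a₁ < ⋯` are naturals with `aᵢ·x mod 1` strictly
increasing to `1`, `A = {a₀, a₁, …}` and `hA` is the `h`-fold sumset, then
`x∗hA` is well-ordered with order type `ω^h`. -/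
theorem stmt_9 (x : ℝ) (hx : Irrational x) (a : ℕ → ℕ) (ha : StrictMono a)
    (hmono : StrictMono fun i => Int.fract (x * a i))
    (hlim : Filter.Tendsto (fun i => Int.fract (x * a i)) Filter.atTop (nhds 1))
    (h : ℕ) (hh : 1 ≤ h) :
    ∃ hWF : ((fun s : ℕ => Int.fract (x * s)) ''
        {s | ∃ f : Fin h → ℕ, (∀ i, f i ∈ Set.range a) ∧ s = ∑ i, f i}).IsWF,
      orderType _ hWF = Ordinal.omega0 ^ h := by
  classical
  obtain ⟨p, rfl⟩ : ∃ p, h = p + 1 := ⟨h - 1, by omega⟩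
  set ε : ℕ → ℝ := fun i => 1 - Int.fract (x * a i) with hε
  have hεpos : ∀ i, 0 < ε i := fun i => by
    have := Int.fract_lt_one (x * a i)
    rw [hε]; simp only []; linarith
  have hεle : ∀ i, ε i ≤ 1 := fun i => by
    have := Int.fract_nonneg (x * a i)
    rw [hε]; simp only []; linarith
  have hεanti : Antitone ε := by
    intro i j hij
    have := hmono.monotone hij
    rw [hε]; simp only []
    linarith
  have hεto : Filter.Tendsto ε Filter.atTop (nhds 0) := by
    have h1 := hlim.const_sub 1
    simpa using h1
  -- pointwise fract identity
  have hfract : ∀ g : Fin (p + 1) → ℕ,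
      Int.fract (x * ((∑ i, a (g i) : ℕ) : ℝ)) = Int.fract (-∑ i, ε (g i)) := by
    intro g
    have h1 : x * ((∑ i, a (g i) : ℕ) : ℝ)
        = (-∑ i, ε (g i)) + ((∑ i, (⌊x * ((a (g i) : ℕ) : ℝ)⌋ + 1) : ℤ) : ℝ) := by
      rw [Nat.cast_sum, Finset.mul_sum, Int.cast_sum, ← Finset.sum_neg_distrib,
        ← Finset.sum_add_distrib]
      apply Finset.sum_congr rfl
      intro i _
      rw [hε]
      simp only [Int.fract]
      push_cast
      ring
    rw [h1, Int.fract_add_intCast]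
  -- fract of negative
  have hfneg : ∀ t : ℝ, Int.fract (-t) = (⌈t⌉ : ℝ) - t := by
    intro t
    rw [Int.fract, Int.floor_neg]
    push_cast
    ring
  -- the target set
  have hTSeq : ((fun s : ℕ => Int.fract (x * s)) ''
      {s | ∃ f : Fin (p + 1) → ℕ, (∀ i, f i ∈ Set.range a) ∧ s = ∑ i, f i})
      = Set.range (fun g : Fin (p + 1) → ℕ => Int.fract (-∑ i, ε (g i))) := by
    ext y
    constructor
    · rintro ⟨s, ⟨f, hfmem, rfl⟩, rfl⟩
      choose gg hgg using hfmem
      refine ⟨gg, ?_⟩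
      have hss : (∑ i, f i) = ∑ i, a (gg i) :=
        Finset.sum_congr rfl (fun i _ => (hgg i).symm)
      show Int.fract (-∑ i, ε (gg i)) = Int.fract (x * ((∑ i, f i : ℕ) : ℝ))
      rw [hss]
      exact (hfract gg).symm
    · rintro ⟨g, rfl⟩
      exact ⟨∑ i, a (g i), ⟨fun i => a (g i), fun i => ⟨g i, rfl⟩, rfl⟩, hfract g⟩
  set R : Set ℝ := Set.range (fun g : Fin (p + 1) → ℕ => Int.fract (-∑ i, ε (g i))) with hR
  -- facts about sums
  have hsum_pos : ∀ g : Fin (p + 1) → ℕ, 0 < ∑ i, ε (g i) :=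
    fun g => Finset.sum_pos (fun j _ => hεpos (g j)) Finset.univ_nonempty
  have hsum_le : ∀ g : Fin (p + 1) → ℕ, (∑ i, ε (g i)) ≤ (p : ℝ) + 1 := by
    intro g
    have hle : ∀ j ∈ Finset.univ, ε (g j) ≤ 1 := fun j _ => hεle (g j)
    calc (∑ j, ε (g j)) ≤ Finset.univ.card • (1 : ℝ) := Finset.sum_le_card_nsmul _ _ _ hle
    _ = (p : ℝ) + 1 := by
      rw [Finset.card_univ, Fintype.card_fin, _root_.nsmul_eq_mul]
      push_cast; ring
  have hceil1 : ∀ g : Fin (p + 1) → ℕ, 1 ≤ ⌈∑ i, ε (g i)⌉ := by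
    intro g
    have := Int.ceil_pos.2 (hsum_pos g)
    omega
  have hceille : ∀ g : Fin (p + 1) → ℕ, ⌈∑ i, ε (g i)⌉ ≤ (p : ℤ) + 1 := by
    intro g
    apply Int.ceil_le.2
    push_cast
    exact hsum_le g
  obtain ⟨hNWF, hNle⟩ := Nset_core ε hεpos hεanti hεto (p + 1)
  obtain ⟨hNWFp, hNlep⟩ := Nset_core ε hεpos hεanti hεto p
  -- well-foundedness of R via a finite covering
  have hcoverWF : R ⊆ {y | ∃ k < p + 1, y ∈ (fun w => ((k : ℕ) : ℝ) + 1 + w) '' Nset ε (p + 1)} := by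
    rintro y ⟨g, rfl⟩
    set t := ∑ i, ε (g i) with ht
    have hc1 : 1 ≤ ⌈t⌉ := by rw [ht]; exact hceil1 g
    have hc2 : ⌈t⌉ ≤ (p : ℤ) + 1 := by rw [ht]; exact hceille g
    set k' := (⌈t⌉ - 1).toNat with hk'
    have hk'c : ((k' : ℕ) : ℝ) = (⌈t⌉ : ℝ) - 1 := by
      have h1 : ((⌈t⌉ - 1).toNat : ℤ) = ⌈t⌉ - 1 := Int.toNat_of_nonneg (by omega)
      rw [hk']
      exact_mod_cast congrArg (fun z : ℤ => (z : ℝ)) h1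
    have hk'lt : k' < p + 1 := by
      rw [hk']
      omega
    refine ⟨k', hk'lt, -t, ⟨g, rfl⟩, ?_⟩
    show ((k' : ℕ) : ℝ) + 1 + (-t) = Int.fract (-t)
    rw [hfneg, hk'c]
    ring
  have hWFR : R.IsWF := by
    have hpWF : ∀ k : ℕ, ((fun w => ((k : ℕ) : ℝ) + 1 + w) '' Nset ε (p + 1)).IsWF :=
      fun k => isWF_image hNWF (fun a _ b _ hab => by linarith)
    have hplt : ∀ k : ℕ, orderType _ (hpWF k) < omega0 ^ (p + 2) := by
      intro k
      have heq : orderType _ (hpWF k) = orderType (Nset ε (p + 1)) hNWF :=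
        orderType_image hNWF (fun a _ b _ hab => by linarith)
      rw [heq]
      exact lt_of_le_of_lt hNle (pow_omega_lt_succ (p + 1))
    obtain ⟨hU, _⟩ := union_lt (p + 2) _ hpWF hplt (p + 1)
    exact hU.mono hcoverWF
  -- upper bound
  have hupper : orderType R hWFR ≤ omega0 ^ (p + 1) := by
    apply orderType_le_of_seg
    intro z hz
    have hz1 : z < 1 := by
      obtain ⟨gz, rfl⟩ := hz
      exact Int.fract_lt_one _
    obtain ⟨N, hN⟩ := (Filter.tendsto_atTop'.1 hεto) (Set.Iio ((1 - z) / ((p : ℝ) + 1)))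
      (Iio_mem_nhds (by have : (0:ℝ) < 1 - z := by linarith
                        positivity))
    set piece : ℕ → Set ℝ := fun e =>
      (fun w => ((e % (p + 1) : ℕ) : ℝ) + 1 - ε (e / (p + 1)) + w) '' Nset ε p with hpiece
    have hpieceWF : ∀ e, (piece e).IsWF :=
      fun e => isWF_image hNWFp (fun a _ b _ hab => by linarith)
    have hpiecelt : ∀ e, orderType _ (hpieceWF e) < omega0 ^ (p + 1) := by
      intro e
      have heq : orderType _ (hpieceWF e) = orderType (Nset ε p) hNWFp :=
        orderType_image hNWFp (fun a _ b _ hab => by linarith)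
      rw [heq]
      exact lt_of_le_of_lt hNlep (pow_omega_lt_succ p)
    obtain ⟨hU, hUlt⟩ := union_lt (p + 1) piece hpieceWF hpiecelt ((p + 1) * N)
    refine lt_of_le_of_lt (orderType_mono (isWF_seg hWFR z) hU ?_) hUlt
    rintro y ⟨hyR, hylt⟩
    obtain ⟨g, rfl⟩ := hyR
    set t := ∑ i, ε (g i) with ht
    have htpos : 0 < t := by rw [ht]; exact hsum_pos g
    have hc1 : 1 ≤ ⌈t⌉ := by rw [ht]; exact hceil1 g
    have hc2 : ⌈t⌉ ≤ (p : ℤ) + 1 := by rw [ht]; exact hceille g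
    have hyval : Int.fract (-t) = (⌈t⌉ : ℝ) - t := hfneg t
    have hylt' : (⌈t⌉ : ℝ) - t < z := by rw [← hyval]; exact hylt
    have hceil1' : (1 : ℝ) ≤ (⌈t⌉ : ℝ) := by exact_mod_cast hc1
    have htδ : 1 - z ≤ t := by linarith
    obtain ⟨i, f', hsum, hbound⟩ := peel ε hεanti g
    have hiN : i < N := by
      by_contra hiN
      push_neg at hiN
      have h1 : ε i < (1 - z) / ((p : ℝ) + 1) := hN i hiN
      have h2 : ((p : ℝ) + 1) * ε i < ((p : ℝ) + 1) * ((1 - z) / ((p : ℝ) + 1)) := by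
        apply mul_lt_mul_of_pos_left h1
        positivity
      rw [mul_div_cancel₀] at h2
      · rw [← ht] at hbound
        linarith
      · positivity
    set k' := (⌈t⌉ - 1).toNat with hk'
    have hk'c : ((k' : ℕ) : ℝ) = (⌈t⌉ : ℝ) - 1 := by
      have h1 : ((⌈t⌉ - 1).toNat : ℤ) = ⌈t⌉ - 1 := Int.toNat_of_nonneg (by omega)
      rw [hk']
      exact_mod_cast congrArg (fun z : ℤ => (z : ℝ)) h1
    have hk'lt : k' < p + 1 := by
      rw [hk']
      omega
    refine ⟨k' + (p + 1) * i, ?_, ?_⟩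
    · calc k' + (p + 1) * i < (p + 1) + (p + 1) * i := Nat.add_lt_add_right hk'lt _
      _ = (p + 1) * (i + 1) := by ring
      _ ≤ (p + 1) * N := Nat.mul_le_mul_left _ (Nat.succ_le_of_lt hiN)
    · have h5 : (k' + (p + 1) * i) % (p + 1) = k' := by
        rw [Nat.add_mul_mod_self_left, Nat.mod_eq_of_lt hk'lt]
      have h6 : (k' + (p + 1) * i) / (p + 1) = i := by
        rw [Nat.add_mul_div_left _ _ (Nat.succ_pos p), Nat.div_eq_of_lt hk'lt, zero_add]
      refine ⟨-∑ j, ε (f' j), ⟨f', rfl⟩, ?_⟩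
      show ((k' + (p + 1) * i) % (p + 1) : ℕ) + 1 - ε ((k' + (p + 1) * i) / (p + 1))
        + (-∑ j, ε (f' j)) = Int.fract (-t)
      rw [h5, h6, hyval, hk'c]
      rw [← ht] at hsum
      rw [hsum]
      ring
  -- construction of the fast-decreasing subsequence
  have hex : ∀ δ : ℝ, 0 < δ → ∃ i, ε i < δ := by
    intro δ hδ
    exact (hεto.eventually (gt_mem_nhds hδ)).exists
  set pick : ℝ → ℕ := fun δ => if hδ : 0 < δ then (hex δ hδ).choose else 0 with hpickdef
  have hpick : ∀ δ, 0 < δ → ε (pick δ) < δ := by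
    intro δ hδ
    rw [hpickdef]
    simp only [dif_pos hδ]
    exact (hex δ hδ).choose_spec
  set c : ℕ → ℕ := fun m => Nat.rec (pick (1/4)) (fun _ prev => pick (ε prev / 4)) m with hc
  have hc0 : ε (c 0) < 1/4 := hpick _ (by norm_num)
  have hcs : ∀ m, ε (c (m + 1)) < ε (c m) / 4 := by
    intro m
    have := hpick (ε (c m) / 4) (by have := hεpos (c m); positivity)
    exact this
  -- lower bound
  have hlower : omega0 ^ (p + 1) ≤ orderType R hWFR := by
    obtain ⟨φ, φA, φB, φC⟩ := emb ε hεpos c hcs (p + 1)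
    have hval : ∀ o : Ordinal.{0}, o < omega0 ^ (p + 1) →
        (1 - φ 0 o) ∈ R ∧ 0 < φ 0 o ∧ φ 0 o < 1 := by
      intro o ho
      obtain ⟨f, hf⟩ := φA 0 o ho
      obtain ⟨h0, hle⟩ := φB 0 o ho
      have hpos' : 0 < φ 0 o := by
        rw [hf]
        exact Finset.sum_pos (fun j _ => hεpos _) Finset.univ_nonempty
      have hlt1 : φ 0 o < 1 := by
        have := hεpos (c 0)
        linarith
      refine ⟨?_, hpos', hlt1⟩
      refine ⟨f, ?_⟩
      show Int.fract (-∑ i, ε (f i)) = 1 - φ 0 o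
      rw [← hf, hfneg]
      have hc1 : ⌈φ 0 o⌉ = 1 := by
        refine Int.ceil_eq_iff.2 ⟨?_, ?_⟩
        · push_cast; linarith
        · push_cast; linarith
      rw [hc1]
      norm_num
    haveI : WellFoundedLT R := ⟨hWFR⟩
    set Ω : Ordinal.{0} := omega0 ^ (p + 1) with hΩ
    haveI : IsWellOrder Ω.ToType (· < ·) := isWellOrder_lt
    haveI : IsWellOrder R ((· < ·) : R → R → Prop) := isWellOrder_lt
    have hemb2 : ((· < ·) : Ω.ToType → Ω.ToType → Prop) ↪r ((· < ·) : R → R → Prop) := by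
      refine RelEmbedding.ofMonotone
        (fun u => (⟨1 - φ 0 ((Ordinal.ToType.mk (o := Ω)).symm u).1,
          (hval _ ((Ordinal.ToType.mk (o := Ω)).symm u).2).1⟩ : R)) ?_
      intro u v huv
      have h1 : ((Ordinal.ToType.mk (o := Ω)).symm u).1 < ((Ordinal.ToType.mk (o := Ω)).symm v).1 :=
        (OrderIso.lt_iff_lt (Ordinal.ToType.mk (o := Ω)).symm).2 huv
      have h2 := φC 0 _ _ h1 ((Ordinal.ToType.mk (o := Ω)).symm v).2
      exact Subtype.mk_lt_mk.2 (by linarith)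
    have hembed := hemb2.ordinal_type_le
    rw [Ordinal.type_toType] at hembed
    exact hembed
  rw [hTSeq]
  exact ⟨hWFR, le_antisymm hupper hlower⟩
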